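/- Let Γ be a finite connected graph with vertex set V of at least 2 vertices, with all vertex degrees at most k, let 1 ≤ p < ∞ and 0 < ε < 1, and assume ρ_ε(Γ) > 0. Then λ₁^{(p)}(Γ) ≤ (k/(1−ε)) · (2/ρ_ε(Γ))^p · (c_{(p)}(Γ)/δ(Γ))^p. -/

import Mathlib

noncomputable section
open scoped ENNReal

/-- The simple graph underlying a finite graph with symmetric edge multiplicities `ω`:
distinct vertices are adjacent iff they are joined by at least one edge. -/
def multGraph {V : Type*} (ω : V → V → ℕ) : SimpleGraph V where
  Adj x y := x ≠ y ∧ 1 ≤ ω x y ∧ 1 ≤ ω y x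
  symm := by
    constructor
    rintro x y ⟨h1, h2, h3⟩
    exact ⟨h1.symm, h3, h2⟩
  loopless := ⟨fun x h => h.1 rfl⟩

/-- The shortest-path metric of the graph with edge multiplicities `ω`, as a real number. -/
def multDist {V : Type*} (ω : V → V → ℕ) (x y : V) : ℝ :=
  ((multGraph ω).dist x y : ℝ)

/-- The diameter `δ(A)` of a subset `A` of a finite metric space `(X, d)`. -/
def setDiam {X : Type*} (d : X → X → ℝ) (A : Set X) : ℝ :=
  sSup {r : ℝ | ∃ x ∈ A, ∃ y ∈ A, r = d x y}

/-- The diameter `δ(X)` of a finite metric space `(X, d)`. -/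
def spaceDiam (X : Type*) (d : X → X → ℝ) : ℝ :=
  sSup {r : ℝ | ∃ x y : X, r = d x y}

/-- The volume distribution constant `ρ_ε(X)` of a finite metric space `(X, d)`:
the minimum of `δ(A)/δ(X)` over subsets `A` with `|A| ≥ ε|X|`. -/
def volumeDistribution (X : Type*) [Fintype X] (d : X → X → ℝ) (ε : ℝ) : ℝ :=
  sInf {r : ℝ | ∃ A : Finset X, ε * (Fintype.card X : ℝ) ≤ (A.card : ℝ) ∧
    r = setDiam d (A : Set X) / spaceDiam X d}

/-- The first positive eigenvalue `λ₁^{(p)}` of the discrete `p`-Laplacian of the finite graph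
with edge multiplicities `ω`, defined via the variational characterization (3). -/
def lambdaOne {V : Type*} [Fintype V] (ω : V → V → ℕ) (p : ℝ) : ℝ :=
  sInf {r : ℝ | ∃ f : V → ℝ, (¬ ∀ x y : V, f x = f y) ∧
    r = (∑ x : V, ∑ y : V, |f x - f y| ^ p * (ω x y : ℝ)) /
        (⨅ α : ℝ, ∑ x : V, |f x - α| ^ p)}

/-- The `ℓ_p`-distortion `c_{(p)}(X)` of a finite metric space `(X, d)`: the infimum over all
injective `1`-Lipschitz maps `F : X → ℓ_p(ℕ)` of `L_F = max_{x ≠ y} d(x,y)/‖F x − F y‖`. -/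
def lpDistortion (X : Type*) [Fintype X] (d : X → X → ℝ) (p : ℝ≥0∞) : ℝ :=
  sInf {L : ℝ | ∃ F : X → lp (fun _ : ℕ => ℝ) p, Function.Injective F ∧
    (∀ x y : X, ‖F x - F y‖ ≤ d x y) ∧
    L = sSup {r : ℝ | ∃ x y : X, x ≠ y ∧ r = d x y / ‖F x - F y‖}}

section AuxLemmas

variable {V : Type*} {ω : V → V → ℕ}

lemma multDist_nonneg (ω : V → V → ℕ) (x y : V) : 0 ≤ multDist ω x y := Nat.cast_nonneg _

lemma multDist_self (ω : V → V → ℕ) (x : V) : multDist ω x x = 0 := by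
  simp [multDist]

lemma multDist_comm (ω : V → V → ℕ) (x y : V) : multDist ω x y = multDist ω y x := by
  simp [multDist, SimpleGraph.dist_comm]

lemma multDist_triangle (hconn : (multGraph ω).Connected) (x y z : V) :
    multDist ω x z ≤ multDist ω x y + multDist ω y z := by
  have := hconn.dist_triangle (u := x) (v := y) (w := z)
  unfold multDist
  exact_mod_cast this

lemma multDist_one_le (hconn : (multGraph ω).Connected) {x y : V} (h : x ≠ y) :
    1 ≤ multDist ω x y := by
  have := hconn.pos_dist_of_ne h
  unfold multDist
  exact_mod_cast this

lemma multDist_eq_zero (hconn : (multGraph ω).Connected) {x y : V}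
    (h : multDist ω x y = 0) : x = y := by
  have : (multGraph ω).dist x y = 0 := by
    have h' := h; unfold multDist at h'; exact_mod_cast h'
  exact (hconn.dist_eq_zero_iff).mp this

lemma multDist_adj {x y : V} (hne : x ≠ y) (h1 : 1 ≤ ω x y) (h2 : 1 ≤ ω y x) :
    multDist ω x y = 1 := by
  have : (multGraph ω).dist x y = 1 :=
    SimpleGraph.dist_eq_one_iff_adj.mpr (show x ≠ y ∧ 1 ≤ ω x y ∧ 1 ≤ ω y x from ⟨hne, h1, h2⟩)
  unfold multDist
  exact_mod_cast this

lemma abs_sub_multDist (hconn : (multGraph ω).Connected) (x y z : V) :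
    |multDist ω x z - multDist ω y z| ≤ multDist ω x y := by
  rw [abs_sub_le_iff]
  constructor
  · have := multDist_triangle hconn x y z; linarith
  · have := multDist_triangle hconn y x z
    rw [multDist_comm ω y x] at this; linarith

lemma clamp_abs_le {a b t β : ℝ} (hat : a ≤ t) (htb : t ≤ b) :
    |t - max a (min b β)| ≤ |t - β| := by
  rcases le_total β a with h | h
  · have hmin : min b β = β := min_eq_right (h.trans (hat.trans htb))
    rw [hmin, max_eq_left h, abs_of_nonneg (by linarith), abs_of_nonneg (by linarith)]
    linarith
  · rcases le_total β b with h' | h'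
    · rw [min_eq_right h', max_eq_right h]
    · rw [min_eq_left h', max_eq_right (hat.trans htb),
        abs_of_nonpos (by linarith), abs_of_nonpos (by linarith)]
      linarith

lemma exists_good_index {a b : ℕ → ℝ} (ha : ∀ n, 0 ≤ a n) (hb : ∀ n, 0 ≤ b n)
    (hsa : Summable a) (hB : 0 < ∑' n, b n) :
    ∃ n, 0 < b n ∧ a n * (∑' m, b m) ≤ (∑' m, a m) * b n := by
  by_contra hcon
  push_neg at hcon
  set A := ∑' m, a m with hA'
  set B := ∑' m, b m with hB'
  have hA : 0 ≤ A := tsum_nonneg ha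
  have key : ∀ n, A * b n ≤ a n * B := by
    intro n
    rcases (hb n).lt_or_eq with h | h
    · exact (hcon n h).le
    · rw [← h, mul_zero]
      exact mul_nonneg (ha n) hB.le
  obtain ⟨n₀, hn₀⟩ : ∃ n, 0 < b n := by
    by_contra h
    push_neg at h
    have hz : ∀ n, b n = 0 := fun n => le_antisymm (h n) (hb n)
    rw [hB'] at hB
    simp [hz] at hB
  have hlt : A * B < A * B := by
    calc A * B = ∑' n, A * b n := by rw [tsum_mul_left]
      _ < ∑' n, a n * B :=
        Summable.tsum_lt_tsum_of_nonneg (fun n => mul_nonneg hA (hb n)) key (hcon n₀ hn₀)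
          (hsa.mul_right B)
      _ = A * B := by rw [tsum_mul_right]
  exact lt_irrefl _ hlt

lemma distortion_set_nonempty [Fintype V] [Nonempty V]
    (hconn : (multGraph ω).Connected) {p : ℝ} (hp1 : 1 ≤ p) :
    {L : ℝ | ∃ F : V → lp (fun _ : ℕ => ℝ) (ENNReal.ofReal p), Function.Injective F ∧
      (∀ x y : V, ‖F x - F y‖ ≤ multDist ω x y) ∧
      L = sSup {r : ℝ | ∃ x y : V, x ≠ y ∧ r = multDist ω x y / ‖F x - F y‖}}.Nonempty := by
  classical
  have hp : 0 < p := lt_of_lt_of_le one_pos hp1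
  haveI : Fact (1 ≤ ENNReal.ofReal p) := ⟨ENNReal.one_le_ofReal.mpr hp1⟩
  have hq : (ENNReal.ofReal p).toReal = p := ENNReal.toReal_ofReal hp.le
  set d := multDist ω with hd
  set m := Fintype.card V with hm
  have hm0 : 0 < m := Fintype.card_pos
  set e : Fin m → V := fun i => (Fintype.equivFin V).symm i with he
  set cm : ℝ := ((m : ℝ)⁻¹) ^ (1/p) with hcm
  have hcm0 : 0 < cm := Real.rpow_pos_of_pos (by positivity) _
  have hcmp : cm ^ p = (m : ℝ)⁻¹ := by
    rw [hcm, ← Real.rpow_mul (by positivity)]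
    rw [one_div_mul_cancel hp.ne', Real.rpow_one]
  set g : V → ℕ → ℝ := fun x n => if h : n < m then d x (e ⟨n, h⟩) * cm else 0 with hg
  have hg_zero : ∀ (x : V), ∀ n ∉ Finset.range m, ‖g x n‖ ^ p = 0 := by
    intro x n hn
    rw [Finset.mem_range] at hn
    simp [hg, hn, Real.zero_rpow hp.ne']
  have hmem : ∀ x, Memℓp (g x) (ENNReal.ofReal p) := by
    intro x
    apply memℓp_gen
    rw [hq]
    exact summable_of_ne_finset_zero (s := Finset.range m) (hg_zero x)
  set F : V → lp (fun _ : ℕ => ℝ) (ENNReal.ofReal p) := fun x => ⟨g x, hmem x⟩ with hF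
  have hsub : ∀ (x y : V) (n : ℕ), (⇑(F x - F y)) n = g x n - g y n := by
    intro x y n
    rw [lp.coeFn_sub]
    rfl
  have hnormp : ∀ x y : V, ‖F x - F y‖ ^ p = ∑ n ∈ Finset.range m, |g x n - g y n| ^ p := by
    intro x y
    have h1 : ‖F x - F y‖ ^ p = ∑' n, ‖(⇑(F x - F y)) n‖ ^ p := by
      have := lp.norm_rpow_eq_tsum (p := ENNReal.ofReal p) (by rw [hq]; exact hp) (F x - F y)
      rw [hq] at this; exact this
    rw [h1, tsum_eq_sum (s := Finset.range m) ?_]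
    · exact Finset.sum_congr rfl fun n _ => by rw [hsub, Real.norm_eq_abs]
    · intro n hn
      rw [Finset.mem_range] at hn
      rw [hsub]
      simp [hg, hn, Real.zero_rpow hp.ne']
  have hlip : ∀ x y : V, ‖F x - F y‖ ≤ d x y := by
    intro x y
    have h2 : ‖F x - F y‖ ^ p ≤ (d x y) ^ p := by
      rw [hnormp]
      have hterm : ∀ n ∈ Finset.range m, |g x n - g y n| ^ p ≤ (d x y) ^ p * (m:ℝ)⁻¹ := by
        intro n hn
        rw [Finset.mem_range] at hn
        simp only [hg, dif_pos hn]
        rw [← sub_mul, abs_mul, abs_of_pos hcm0,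
          Real.mul_rpow (abs_nonneg _) hcm0.le, hcmp]
        have h3 : |d x (e ⟨n, hn⟩) - d y (e ⟨n, hn⟩)| ^ p ≤ (d x y) ^ p :=
          Real.rpow_le_rpow (abs_nonneg _) (abs_sub_multDist hconn x y _) hp.le
        exact mul_le_mul_of_nonneg_right h3 (by positivity)
      calc ∑ n ∈ Finset.range m, |g x n - g y n| ^ p
          ≤ ∑ _n ∈ Finset.range m, (d x y) ^ p * (m:ℝ)⁻¹ := Finset.sum_le_sum hterm
        _ = (d x y) ^ p := by
            rw [Finset.sum_const, Finset.card_range, nsmul_eq_mul]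
            field_simp
    exact (Real.rpow_le_rpow_iff (norm_nonneg (F x - F y)) (multDist_nonneg ω x y) hp).mp h2
  have hinj : Function.Injective F := by
    intro x y hxy
    have hgxy : g x = g y := congrArg Subtype.val hxy
    set i := (Fintype.equivFin V) x with hi'
    have hi : i.val < m := i.isLt
    have hco : g x i.val = g y i.val := by rw [hgxy]
    simp only [hg, dif_pos hi] at hco
    have hex : e ⟨i.val, hi⟩ = x := by
      rw [he]
      have : (⟨i.val, hi⟩ : Fin m) = i := rfl
      rw [this, hi']
      exact (Fintype.equivFin V).symm_apply_apply x
    rw [hex, hd, multDist_self] at hco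
    have hzero : d y x = 0 := by
      have := hco.symm
      rw [zero_mul] at this
      exact (mul_eq_zero.mp this).resolve_right hcm0.ne'
    exact (multDist_eq_zero hconn hzero).symm
  exact ⟨_, F, hinj, hlip, rfl⟩

end AuxLemmas

set_option maxHeartbeats 3200000 in
/-- Theorem 3: for a finite connected graph `Γ` on at least two vertices with
degrees at most `k`, `1 ≤ p < ∞`, `0 < ε < 1` and `ρ_ε(Γ) > 0`,
`λ₁^{(p)}(Γ) ≤ (k/(1−ε)) (2/ρ_ε(Γ))^p (c_{(p)}(Γ)/δ(Γ))^p`. -/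
theorem statement_0 {V : Type*} [Fintype V] (ω : V → V → ℕ)
    (hsymm : ∀ x y : V, ω x y = ω y x)
    (hconn : (multGraph ω).Connected)
    (hcard : 2 ≤ Fintype.card V)
    (k : ℕ) (hdeg : ∀ x : V, (∑ y : V, ω x y) ≤ k)
    (p : ℝ) (hp : 1 ≤ p)
    (ε : ℝ) (hε0 : 0 < ε) (hε1 : ε < 1)
    (hρ : 0 < volumeDistribution V (multDist ω) ε) :
    lambdaOne ω p ≤
      ((k : ℝ) / (1 - ε)) * (2 / volumeDistribution V (multDist ω) ε) ^ p *
        (lpDistortion V (multDist ω) (ENNReal.ofReal p) / spaceDiam V (multDist ω)) ^ p := by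
  classical
  have hp0 : 0 < p := lt_of_lt_of_le one_pos hp
  haveI : Fact (1 ≤ ENNReal.ofReal p) := ⟨ENNReal.one_le_ofReal.mpr hp⟩
  have hq : (ENNReal.ofReal p).toReal = p := ENNReal.toReal_ofReal hp0.le
  haveI hVne : Nonempty V := Fintype.card_pos_iff.mp (by omega)
  set d := multDist ω with hd
  set δX := spaceDiam V d with hδX
  set ρ := volumeDistribution V d ε with hρdef
  set c := lpDistortion V d (ENNReal.ofReal p) with hcdef
  obtain ⟨x₀, y₀, hxy₀⟩ := Fintype.exists_pair_of_one_lt_card (by omega : 1 < Fintype.card V)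
  set N := (Fintype.card V : ℝ) with hN
  have hN0 : (0:ℝ) < N := by
    rw [hN]; exact_mod_cast Fintype.card_pos
  have h1ε : (0:ℝ) < 1 - ε := by linarith
  -- diameter facts
  have hSfin : {r : ℝ | ∃ x y : V, r = d x y}.Finite := by
    apply Set.Finite.subset (Set.finite_range (fun z : V × V => d z.1 z.2))
    rintro r ⟨x, y, rfl⟩; exact ⟨(x, y), rfl⟩
  have hle_δ : ∀ x y : V, d x y ≤ δX := fun x y =>
    le_csSup hSfin.bddAbove ⟨x, y, rfl⟩
  have hδpos : 0 < δX :=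
    lt_of_lt_of_le one_pos ((multDist_one_le hconn hxy₀).trans (hle_δ x₀ y₀))
  have setDiam_lt : ∀ (A : Finset V), A.Nonempty → ∀ M : ℝ,
      (∀ x ∈ A, ∀ y ∈ A, d x y < M) → setDiam d (A : Set V) < M := by
    intro A hA M hbound
    have hsub : {r : ℝ | ∃ x ∈ (A : Set V), ∃ y ∈ (A : Set V), r = d x y} ⊆
        {r : ℝ | ∃ x y : V, r = d x y} := by
      rintro r ⟨x, _, y, _, rfl⟩; exact ⟨x, y, rfl⟩
    have hfin := hSfin.subset hsub
    obtain ⟨a0, ha0⟩ := hA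
    have hne : {r : ℝ | ∃ x ∈ (A : Set V), ∃ y ∈ (A : Set V), r = d x y}.Nonempty :=
      ⟨d a0 a0, a0, Finset.mem_coe.mpr ha0, a0, Finset.mem_coe.mpr ha0, rfl⟩
    obtain ⟨x, hx, y, hy, hval⟩ := hne.csSup_mem hfin
    have heq : setDiam d (A : Set V) = d x y := hval
    rw [heq]
    exact hbound x (Finset.mem_coe.mp hx) y (Finset.mem_coe.mp hy)
  have setDiam_nonneg : ∀ (A : Finset V), A.Nonempty → 0 ≤ setDiam d (A : Set V) := by
    rintro A ⟨a0, ha0⟩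
    have hsub : {r : ℝ | ∃ x ∈ (A : Set V), ∃ y ∈ (A : Set V), r = d x y} ⊆
        {r : ℝ | ∃ x y : V, r = d x y} := by
      rintro r ⟨x, _, y, _, rfl⟩; exact ⟨x, y, rfl⟩
    have hfin := hSfin.subset hsub
    have h0mem : (0:ℝ) ∈ {r : ℝ | ∃ x ∈ (A : Set V), ∃ y ∈ (A : Set V), r = d x y} :=
      ⟨a0, Finset.mem_coe.mpr ha0, a0, Finset.mem_coe.mpr ha0, (multDist_self ω a0).symm⟩
    exact le_csSup hfin.bddAbove h0mem
  have hρle : ∀ A : Finset V, A.Nonempty → ε * N ≤ (A.card : ℝ) →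
      ρ ≤ setDiam d (A : Set V) / δX := by
    intro A hAne hA
    have hbdd : BddBelow {r : ℝ | ∃ A : Finset V, ε * N ≤ (A.card : ℝ) ∧
        r = setDiam d (A : Set V) / δX} := by
      refine ⟨0, ?_⟩
      rintro r ⟨B, hB, rfl⟩
      have hBne : B.Nonempty := by
        rw [← Finset.card_pos]
        by_contra h
        push_neg at h
        have hc0 : B.card = 0 := by omega
        rw [hc0] at hB
        simp only [Nat.cast_zero] at hB
        nlinarith
      exact div_nonneg (setDiam_nonneg B hBne) hδpos.le
    exact csInf_le hbdd ⟨A, hA, rfl⟩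
  -- distortion facts
  have hDne := distortion_set_nonempty hconn hp (ω := ω)
  rw [← hd] at hDne
  have hratio_fin : ∀ F : V → lp (fun _ : ℕ => ℝ) (ENNReal.ofReal p),
      {r : ℝ | ∃ x y : V, x ≠ y ∧ r = d x y / ‖F x - F y‖}.Finite := by
    intro F
    apply Set.Finite.subset (Set.finite_range (fun z : V × V => d z.1 z.2 / ‖F z.1 - F z.2‖))
    rintro r ⟨x, y, _, rfl⟩; exact ⟨(x, y), rfl⟩
  have hL_facts : ∀ F : V → lp (fun _ : ℕ => ℝ) (ENNReal.ofReal p), Function.Injective F →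
      (∀ x y : V, ‖F x - F y‖ ≤ d x y) →
      (1 ≤ sSup {r : ℝ | ∃ x y : V, x ≠ y ∧ r = d x y / ‖F x - F y‖}) ∧
      (∀ x y : V, x ≠ y →
        d x y ≤ sSup {r : ℝ | ∃ x y : V, x ≠ y ∧ r = d x y / ‖F x - F y‖} * ‖F x - F y‖) := by
    intro F hFinj hFlip
    have hnpos : ∀ x y : V, x ≠ y → 0 < ‖F x - F y‖ := by
      intro x y hxy
      rw [norm_pos_iff]
      exact sub_ne_zero.mpr (fun h => hxy (hFinj h))
    constructor
    · have h1 : (1:ℝ) ≤ d x₀ y₀ / ‖F x₀ - F y₀‖ :=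
        (one_le_div (hnpos x₀ y₀ hxy₀)).mpr (hFlip x₀ y₀)
      exact h1.trans (le_csSup (hratio_fin F).bddAbove ⟨x₀, y₀, hxy₀, rfl⟩)
    · intro x y hxy
      have h2 : d x y / ‖F x - F y‖ ≤ _ :=
        le_csSup (hratio_fin F).bddAbove ⟨x, y, hxy, rfl⟩
      exact (div_le_iff₀ (hnpos x y hxy)).mp h2
  have hc1 : 1 ≤ c := by
    apply le_csInf hDne
    rintro L ⟨F, hFinj, hFlip, rfl⟩
    exact (hL_facts F hFinj hFlip).1
  have hcpos : 0 < c := lt_of_lt_of_le one_pos hc1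
  -- the key quantitative estimate
  have key : ∀ r : ℝ, 0 < r → 2 * r * c < ρ * δX →
      lambdaOne ω p ≤ (k : ℝ) / ((1 - ε) * r ^ p) := by
    intro r hr hrc
    have hc_lt : c < ρ * δX / (2 * r) := by
      rw [lt_div_iff₀ (by positivity)]
      nlinarith
    obtain ⟨L, hLmem, hLlt⟩ := exists_lt_of_csInf_lt hDne hc_lt
    obtain ⟨F, hFinj, hFlip, hLdef⟩ := hLmem
    have h2rL : 2 * r * L < ρ * δX := by
      rw [lt_div_iff₀ (by positivity)] at hLlt
      nlinarith
    obtain ⟨hL1, hdle⟩ := hL_facts F hFinj hFlip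
    rw [← hLdef] at hL1 hdle
    have hLpos : 0 < L := lt_of_lt_of_le one_pos hL1
    -- denominator bound
    have hDbound : ∀ α : lp (fun _ : ℕ => ℝ) (ENNReal.ofReal p),
        (1 - ε) * N * r ^ p ≤ ∑ x : V, ‖F x - α‖ ^ p := by
      intro α
      set A : Finset V := Finset.univ.filter (fun x => ‖F x - α‖ < r) with hA
      have hAcard : (A.card : ℝ) < ε * N := by
        by_contra hcon
        push_neg at hcon
        have hAne : A.Nonempty := by
          rw [← Finset.card_pos]
          by_contra h
          push_neg at h
          have hc0 : A.card = 0 := by omega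
          rw [hc0] at hcon
          simp only [Nat.cast_zero] at hcon
          nlinarith
        have h1 := hρle A hAne hcon
        have h2 : setDiam d (A : Set V) < ρ * δX := by
          apply setDiam_lt A hAne
          intro x hx y hy
          rcases eq_or_ne x y with rfl | hne
          · rw [hd, multDist_self]
            positivity
          · have hx' : ‖F x - α‖ < r := (Finset.mem_filter.mp hx).2
            have hy' : ‖F y - α‖ < r := (Finset.mem_filter.mp hy).2
            have htri : ‖F x - F y‖ ≤ ‖F x - α‖ + ‖F y - α‖ := by
              have heq : F x - F y = (F x - α) - (F y - α) := by abel
              rw [heq]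
              exact norm_sub_le _ _
            calc d x y ≤ L * ‖F x - F y‖ := hdle x y hne
              _ ≤ L * (‖F x - α‖ + ‖F y - α‖) :=
                  mul_le_mul_of_nonneg_left htri hLpos.le
              _ < L * (2 * r) := by
                  apply mul_lt_mul_of_pos_left (by linarith) hLpos
              _ = 2 * r * L := by ring
              _ < ρ * δX := h2rL
        have h3 : setDiam d (A : Set V) / δX < ρ := by
          rw [div_lt_iff₀ hδpos]
          nlinarith
        linarith
      set B : Finset V := Finset.univ.filter (fun x => ¬ ‖F x - α‖ < r) with hB
      have hcards : A.card + B.card = Fintype.card V := by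
        rw [hA, hB]
        rw [Finset.card_filter_add_card_filter_not]
        exact Finset.card_univ
      have hBcard : (1 - ε) * N ≤ (B.card : ℝ) := by
        have hNc : (A.card : ℝ) + (B.card : ℝ) = N := by
          rw [hN]; exact_mod_cast hcards
        nlinarith
      calc (1 - ε) * N * r ^ p ≤ (B.card : ℝ) * r ^ p :=
            mul_le_mul_of_nonneg_right hBcard (Real.rpow_nonneg hr.le p)
        _ = ∑ _x ∈ B, r ^ p := by rw [Finset.sum_const, nsmul_eq_mul]
        _ ≤ ∑ x ∈ B, ‖F x - α‖ ^ p := by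
            apply Finset.sum_le_sum
            intro x hx
            have hxr := (Finset.mem_filter.mp hx).2
            push_neg at hxr
            exact Real.rpow_le_rpow hr.le hxr hp0.le
        _ ≤ ∑ x : V, ‖F x - α‖ ^ p := by
            apply Finset.sum_le_sum_of_subset_of_nonneg (Finset.subset_univ B)
            intro x _ _
            exact Real.rpow_nonneg (norm_nonneg _) p
    -- coordinate functions
    set a : ℕ → ℝ := fun n => ∑ x : V, ∑ y : V, |F x n - F y n| ^ p * (ω x y : ℝ) with ha'
    set b : ℕ → ℝ := fun n => ⨅ α : ℝ, ∑ x : V, |F x n - α| ^ p with hb'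
    have ha_nonneg : ∀ n, 0 ≤ a n := fun n =>
      Finset.sum_nonneg fun x _ => Finset.sum_nonneg fun y _ =>
        mul_nonneg (Real.rpow_nonneg (abs_nonneg _) _) (Nat.cast_nonneg _)
    have hb_nonneg : ∀ n, 0 ≤ b n := fun n =>
      Real.iInf_nonneg fun β => Finset.sum_nonneg fun x _ => Real.rpow_nonneg (abs_nonneg _) _
    have hbdd_range : ∀ n : ℕ, BddBelow (Set.range (fun β : ℝ => ∑ x : V, |F x n - β| ^ p)) := by
      intro n
      refine ⟨0, ?_⟩
      rintro v ⟨β, rfl⟩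
      exact Finset.sum_nonneg fun x _ => Real.rpow_nonneg (abs_nonneg _) _
    have hsum_coord : ∀ x : V, Summable (fun n => |F x n| ^ p) := by
      intro x
      have h2 := (memℓp_gen_iff (p := ENNReal.ofReal p) (by rw [hq]; exact hp0)).mp (lp.memℓp (F x))
      rw [hq] at h2
      simpa [Real.norm_eq_abs] using h2
    have hsum_sub : ∀ x y : V, Summable (fun n => |F x n - F y n| ^ p) := by
      intro x y
      have h2 := (memℓp_gen_iff (p := ENNReal.ofReal p)
        (by rw [hq]; exact hp0)).mp (lp.memℓp (F x - F y))
      rw [hq] at h2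
      have h3 : ∀ n : ℕ, ‖(⇑(F x - F y)) n‖ = |F x n - F y n| := by
        intro n; rw [lp.coeFn_sub, Pi.sub_apply, Real.norm_eq_abs]
      simpa [h3] using h2
    have hb_le : ∀ n, b n ≤ ∑ x : V, |F x n| ^ p := by
      intro n
      have h1 := ciInf_le (hbdd_range n) (0 : ℝ)
      rw [hb']
      simpa using h1
    have hsumsum : Summable (fun n => ∑ x : V, |F x n| ^ p) :=
      summable_sum (fun x _ => hsum_coord x)
    have hb_sum : Summable b := Summable.of_nonneg_of_le hb_nonneg hb_le hsumsum
    have ha_sum : Summable a := by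
      apply summable_sum
      intro x _
      exact summable_sum fun y _ => (hsum_sub x y).mul_right _
    -- numerator bound
    have hnorm_tsum : ∀ x y : V, ∑' n, |F x n - F y n| ^ p = ‖F x - F y‖ ^ p := by
      intro x y
      have h1 := lp.norm_rpow_eq_tsum (p := ENNReal.ofReal p) (by rw [hq]; exact hp0) (F x - F y)
      rw [hq] at h1
      rw [h1]
      exact tsum_congr fun n => by rw [lp.coeFn_sub, Pi.sub_apply, Real.norm_eq_abs]
    have hA_le : ∑' n, a n ≤ (k : ℝ) * N := by
      have h1 : ∑' n, a n = ∑ x : V, ∑' n, ∑ y : V, |F x n - F y n| ^ p * (ω x y : ℝ) := by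
        rw [ha']
        exact Summable.tsum_finsetSum fun x _ => summable_sum fun y _ => (hsum_sub x y).mul_right _
      have h2 : ∀ x : V, ∑' n, ∑ y : V, |F x n - F y n| ^ p * (ω x y : ℝ)
          = ∑ y : V, ‖F x - F y‖ ^ p * (ω x y : ℝ) := by
        intro x
        rw [Summable.tsum_finsetSum fun y _ => (hsum_sub x y).mul_right _]
        exact Finset.sum_congr rfl fun y _ => by rw [tsum_mul_right, hnorm_tsum]
      have h3 : ∀ x y : V, ‖F x - F y‖ ^ p * (ω x y : ℝ) ≤ (ω x y : ℝ) := by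
        intro x y
        rcases Nat.eq_zero_or_pos (ω x y) with h0 | h1'
        · simp [h0]
        · rcases eq_or_ne x y with rfl | hne
          · rw [sub_self, norm_zero, Real.zero_rpow hp0.ne', zero_mul]
            exact Nat.cast_nonneg _
          · have hωyx : 1 ≤ ω y x := by rw [← hsymm x y]; exact h1'
            have hd1 : d x y = 1 := multDist_adj hne h1' hωyx
            have hle1 : ‖F x - F y‖ ≤ 1 := (hFlip x y).trans_eq hd1
            have h2' : ‖F x - F y‖ ^ p ≤ 1 := Real.rpow_le_one (norm_nonneg _) hle1 hp0.le
            nlinarith [show (0:ℝ) ≤ (ω x y : ℝ) from Nat.cast_nonneg _]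
      rw [h1]
      calc ∑ x : V, ∑' n, ∑ y : V, |F x n - F y n| ^ p * (ω x y : ℝ)
          = ∑ x : V, ∑ y : V, ‖F x - F y‖ ^ p * (ω x y : ℝ) :=
            Finset.sum_congr rfl fun x _ => h2 x
        _ ≤ ∑ x : V, ∑ y : V, (ω x y : ℝ) :=
            Finset.sum_le_sum fun x _ => Finset.sum_le_sum fun y _ => h3 x y
        _ ≤ ∑ _x : V, (k : ℝ) := by
            apply Finset.sum_le_sum
            intro x _
            rw [← Nat.cast_sum]
            exact_mod_cast hdeg x
        _ = (k : ℝ) * N := by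
            rw [Finset.sum_const, nsmul_eq_mul, hN, Finset.card_univ, mul_comm]
    -- lower bound on ∑' b
    set D := (1 - ε) * N * r ^ p with hD
    have hrp : 0 < r ^ p := Real.rpow_pos_of_pos hr p
    have hDpos : 0 < D := by rw [hD]; positivity
    have hB_ge : ∀ η : ℝ, 0 < η → D - η ≤ ∑' n, b n := by
      intro η hη
      have hbn_eq : ∀ n : ℕ, b n = ⨅ β : ℝ, ∑ x : V, |F x n - β| ^ p := fun n => by rw [hb']
      have hex : ∀ n : ℕ, ∃ β : ℝ,
          (∑ x : V, |F x n - β| ^ p ≤ b n + η / 2 / 2 ^ n) ∧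
          (|β| ^ p ≤ ∑ x : V, |F x n| ^ p) := by
        intro n
        have hpow : (0:ℝ) < η / 2 / 2 ^ n := by positivity
        have hlt : (⨅ β : ℝ, ∑ x : V, |F x n - β| ^ p) < b n + η / 2 / 2 ^ n := by
          rw [← hbn_eq n]; linarith
        obtain ⟨β₀, hβ₀⟩ := exists_lt_of_ciInf_lt hlt
        have huniv : (Finset.univ : Finset V).Nonempty := Finset.univ_nonempty
        set lo := Finset.univ.inf' huniv (fun x : V => F x n) with hlo
        set hi := Finset.univ.sup' huniv (fun x : V => F x n) with hhi
        have hlohi : lo ≤ hi := by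
          rw [hlo, hhi]
          exact (Finset.inf'_le _ (Finset.mem_univ x₀)).trans
            (Finset.le_sup' (f := fun x : V => F x n) (Finset.mem_univ x₀))
        refine ⟨max lo (min hi β₀), ?_, ?_⟩
        · calc ∑ x : V, |F x n - max lo (min hi β₀)| ^ p
              ≤ ∑ x : V, |F x n - β₀| ^ p := by
                apply Finset.sum_le_sum
                intro x _
                exact Real.rpow_le_rpow (abs_nonneg _)
                  (clamp_abs_le (Finset.inf'_le _ (Finset.mem_univ x))
                    (Finset.le_sup' (f := fun x : V => F x n) (Finset.mem_univ x))) hp0.le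
            _ ≤ b n + η / 2 / 2 ^ n := hβ₀.le
        · obtain ⟨xm, _, hxm⟩ := Finset.exists_mem_eq_inf' huniv (fun x : V => F x n)
          obtain ⟨xM, _, hxM⟩ := Finset.exists_mem_eq_sup' huniv (fun x : V => F x n)
          have hlelo : lo ≤ max lo (min hi β₀) := le_max_left _ _
          have hlehi : max lo (min hi β₀) ≤ hi := max_le hlohi (min_le_left _ _)
          have habs : |max lo (min hi β₀)| ≤ max |lo| |hi| := abs_le_max_abs_abs hlelo hlehi
          have hsingle : ∀ z : V, |F z n| ^ p ≤ ∑ x : V, |F x n| ^ p := by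
            intro z
            exact Finset.single_le_sum (f := fun x : V => |F x n| ^ p)
              (fun x _ => Real.rpow_nonneg (abs_nonneg _) _) (Finset.mem_univ z)
          rcases max_cases |lo| |hi| with ⟨hmax, _⟩ | ⟨hmax, _⟩
          · have : |max lo (min hi β₀)| ^ p ≤ |lo| ^ p := by
              rw [hmax] at habs
              exact Real.rpow_le_rpow (abs_nonneg _) habs hp0.le
            calc |max lo (min hi β₀)| ^ p ≤ |lo| ^ p := this
              _ = |F xm n| ^ p := by rw [hlo, hxm]
              _ ≤ ∑ x : V, |F x n| ^ p := hsingle xm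
          · have : |max lo (min hi β₀)| ^ p ≤ |hi| ^ p := by
              rw [hmax] at habs
              exact Real.rpow_le_rpow (abs_nonneg _) habs hp0.le
            calc |max lo (min hi β₀)| ^ p ≤ |hi| ^ p := this
              _ = |F xM n| ^ p := by rw [hhi, hxM]
              _ ≤ ∑ x : V, |F x n| ^ p := hsingle xM
      choose β hβ1 hβ2 using hex
      have hβmem : Memℓp β (ENNReal.ofReal p) := by
        apply memℓp_gen
        rw [hq]
        apply Summable.of_nonneg_of_le (fun n => Real.rpow_nonneg (norm_nonneg _) _)
          (fun n => ?_) hsumsum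
        rw [Real.norm_eq_abs]
        exact hβ2 n
      set αlp : lp (fun _ : ℕ => ℝ) (ENNReal.ofReal p) := ⟨β, hβmem⟩ with hαlp
      have hsum1 : ∀ x : V, Summable (fun n => |F x n - β n| ^ p) := by
        intro x
        have h2 := (memℓp_gen_iff (p := ENNReal.ofReal p)
          (by rw [hq]; exact hp0)).mp (lp.memℓp (F x - αlp))
        rw [hq] at h2
        have h3 : ∀ n : ℕ, ‖(⇑(F x - αlp)) n‖ = |F x n - β n| := by
          intro n; rw [lp.coeFn_sub, Pi.sub_apply, Real.norm_eq_abs]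
        simpa [h3] using h2
      have heq1 : ∑ x : V, ‖F x - αlp‖ ^ p = ∑' n, ∑ x : V, |F x n - β n| ^ p := by
        rw [Summable.tsum_finsetSum fun x _ => hsum1 x]
        apply Finset.sum_congr rfl
        intro x _
        have h1 := lp.norm_rpow_eq_tsum (p := ENNReal.ofReal p) (by rw [hq]; exact hp0) (F x - αlp)
        rw [hq] at h1
        rw [h1]
        exact tsum_congr fun n => by rw [lp.coeFn_sub, Pi.sub_apply, Real.norm_eq_abs]
      have hgeo_sum : Summable (fun n : ℕ => η / 2 / 2 ^ n) := summable_geometric_two' η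
      have hgeo : ∑' n : ℕ, η / 2 / 2 ^ n = η := tsum_geometric_two' η
      have hle2 : ∑' n, ∑ x : V, |F x n - β n| ^ p ≤ (∑' n, b n) + η := by
        calc ∑' n, ∑ x : V, |F x n - β n| ^ p
            ≤ ∑' n, (b n + η / 2 / 2 ^ n) :=
              Summable.tsum_le_tsum (fun n => hβ1 n) (summable_sum fun x _ => hsum1 x)
                (hb_sum.add hgeo_sum)
          _ = (∑' n, b n) + η := by rw [Summable.tsum_add hb_sum hgeo_sum, hgeo]
      have hD1 := hDbound αlp
      rw [heq1] at hD1
      rw [hD]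
      linarith
    have hB0 : 0 < ∑' n, b n := by
      have := hB_ge (D / 2) (by positivity)
      linarith
    obtain ⟨n, hbn, hab⟩ := exists_good_index ha_nonneg hb_nonneg ha_sum hB0
    -- the test function
    have hf_nc : ¬ ∀ x y : V, F x n = F y n := by
      intro hconst
      have h1 : b n ≤ ∑ x : V, |F x n - F x₀ n| ^ p := by
        rw [hb']
        exact ciInf_le (hbdd_range n) (F x₀ n)
      have h2 : ∑ x : V, |F x n - F x₀ n| ^ p = 0 := by
        apply Finset.sum_eq_zero
        intro x _
        rw [hconst x x₀, sub_self, abs_zero, Real.zero_rpow hp0.ne']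
      rw [h2] at h1
      linarith
    have hmem_lam : a n / b n ∈ {t : ℝ | ∃ f : V → ℝ, (¬ ∀ x y : V, f x = f y) ∧
        t = (∑ x : V, ∑ y : V, |f x - f y| ^ p * (ω x y : ℝ)) /
          (⨅ α : ℝ, ∑ x : V, |f x - α| ^ p)} := by
      refine ⟨fun x => F x n, hf_nc, ?_⟩
      rw [ha', hb']
    have hlam_bdd : BddBelow {t : ℝ | ∃ f : V → ℝ, (¬ ∀ x y : V, f x = f y) ∧
        t = (∑ x : V, ∑ y : V, |f x - f y| ^ p * (ω x y : ℝ)) /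
          (⨅ α : ℝ, ∑ x : V, |f x - α| ^ p)} := by
      refine ⟨0, ?_⟩
      rintro t ⟨f, _, rfl⟩
      apply div_nonneg
      · exact Finset.sum_nonneg fun x _ => Finset.sum_nonneg fun y _ =>
          mul_nonneg (Real.rpow_nonneg (abs_nonneg _) _) (Nat.cast_nonneg _)
      · exact Real.iInf_nonneg fun β => Finset.sum_nonneg fun x _ =>
          Real.rpow_nonneg (abs_nonneg _) _
    have hlam_le : lambdaOne ω p ≤ a n / b n := csInf_le hlam_bdd hmem_lam
    have hlam_zero : 0 ≤ lambdaOne ω p := by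
      apply le_csInf ⟨a n / b n, hmem_lam⟩
      rintro t ⟨f, _, rfl⟩
      apply div_nonneg
      · exact Finset.sum_nonneg fun x _ => Finset.sum_nonneg fun y _ =>
          mul_nonneg (Real.rpow_nonneg (abs_nonneg _) _) (Nat.cast_nonneg _)
      · exact Real.iInf_nonneg fun β => Finset.sum_nonneg fun x _ =>
          Real.rpow_nonneg (abs_nonneg _) _
    have hfrac : a n / b n ≤ (∑' m, a m) / (∑' m, b m) := by
      rw [div_le_div_iff₀ hbn hB0]
      exact hab
    have hfinal : ∀ η : ℝ, 0 < η → η < D → lambdaOne ω p ≤ ((k : ℝ) * N) / (D - η) := by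
      intro η hη hηD
      have hfrac2 : (∑' m, a m) / (∑' m, b m) ≤ ((k : ℝ) * N) / (D - η) := by
        apply div_le_div₀ (by positivity) hA_le (by linarith) (hB_ge η hη)
      exact hlam_le.trans (hfrac.trans hfrac2)
    -- let η → 0
    have hlam_D : lambdaOne ω p * D ≤ (k : ℝ) * N := by
      by_contra hcon
      push_neg at hcon
      set lam := lambdaOne ω p with hlam
      set η : ℝ := min (D / 2) ((lam * D - (k : ℝ) * N) / (2 * (lam + 1))) with hη'
      have hnum : 0 < lam * D - (k : ℝ) * N := by linarith
      have hη0 : 0 < η := lt_min (by positivity) (by positivity)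
      have hηD : η < D := lt_of_le_of_lt (min_le_left _ _) (by linarith)
      have h1 := hfinal η hη0 hηD
      rw [le_div_iff₀ (by linarith : (0:ℝ) < D - η)] at h1
      have h2 : η ≤ (lam * D - (k : ℝ) * N) / (2 * (lam + 1)) := min_le_right _ _
      have h3 : lam * η ≤ lam * ((lam * D - (k : ℝ) * N) / (2 * (lam + 1))) :=
        mul_le_mul_of_nonneg_left h2 hlam_zero
      have h4 : lam * ((lam * D - (k : ℝ) * N) / (2 * (lam + 1))) < lam * D - (k : ℝ) * N := by
        rw [mul_div_assoc']
        rw [div_lt_iff₀ (by positivity)]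
        nlinarith
      nlinarith
    calc lambdaOne ω p ≤ ((k : ℝ) * N) / D := by
          rw [le_div_iff₀ hDpos]; exact hlam_D
      _ = (k : ℝ) / ((1 - ε) * r ^ p) := by
          rw [hD, mul_comm (k : ℝ) N, show (1 - ε) * N * r ^ p = N * ((1 - ε) * r ^ p) by ring,
            mul_div_mul_left _ _ hN0.ne']
  -- take the limit r → ρ δX / (2 c)
  set r₀ := ρ * δX / (2 * c) with hr₀
  have hr₀pos : 0 < r₀ := by rw [hr₀]; positivity
  have hkey' : ∀ r ∈ Set.Ioo (0:ℝ) r₀, lambdaOne ω p ≤ (k : ℝ) / ((1 - ε) * r ^ p) := by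
    intro r hr
    apply key r hr.1
    have h1 : r * (2 * c) < r₀ * (2 * c) :=
      mul_lt_mul_of_pos_right hr.2 (by positivity)
    have h2 : r₀ * (2 * c) = ρ * δX := by
      rw [hr₀]
      field_simp
    nlinarith
  have hcont : Filter.Tendsto (fun r : ℝ => (k : ℝ) / ((1 - ε) * r ^ p))
      (nhdsWithin r₀ (Set.Iio r₀)) (nhds ((k : ℝ) / ((1 - ε) * r₀ ^ p))) := by
    apply Filter.Tendsto.mono_left _ nhdsWithin_le_nhds
    apply ContinuousAt.tendsto
    apply ContinuousAt.div continuousAt_const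
    · exact continuousAt_const.mul (Real.continuousAt_rpow_const r₀ p (Or.inl hr₀pos.ne'))
    · have : 0 < r₀ ^ p := Real.rpow_pos_of_pos hr₀pos p
      positivity
  have hev : ∀ᶠ r in nhdsWithin r₀ (Set.Iio r₀),
      lambdaOne ω p ≤ (k : ℝ) / ((1 - ε) * r ^ p) := by
    filter_upwards [Ioo_mem_nhdsLT_of_mem (Set.mem_Ioc.mpr ⟨hr₀pos, le_refl r₀⟩)] with r hr
    exact hkey' r hr
  have hlim : lambdaOne ω p ≤ (k : ℝ) / ((1 - ε) * r₀ ^ p) := ge_of_tendsto hcont hev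
  have hRHS : ((k : ℝ) / (1 - ε)) * (2 / ρ) ^ p * (c / δX) ^ p
      = (k : ℝ) / ((1 - ε) * r₀ ^ p) := by
    rw [mul_assoc, ← Real.mul_rpow (by positivity) (by positivity)]
    have h1 : 2 / ρ * (c / δX) = r₀⁻¹ := by
      rw [hr₀]
      field_simp

    rw [h1, Real.inv_rpow hr₀pos.le]
    have hrp0 : 0 < r₀ ^ p := Real.rpow_pos_of_pos hr₀pos p
    field_simp
  rw [hRHS]
  exact hlim
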